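/- arXiv:2201.00639 — 5 statements merged into one kernel-verified Lean document; each statement's English description precedes it below -/
import Mathlib

section
/- Let Φ : X → ℝ ∪ {∞} be proper, m ∈ ℕ, a > 0, and let {x^k} satisfy the nonmonotone decrease condition: Φ(x^{k+1}) + a‖x^{k+1} − x^k‖² ≤ max_{j = max(0,k−m),…,k} Φ(x^j) for all k. Define ℓ(k) as the maximum index attaining this max. Then the sequence {Φ(x^{ℓ(k)})} is nonincreasing, i.e., Φ(x^{ℓ(k+1)}) ≤ Φ(x^{ℓ(k)}) for all k ∈ ℕ. -/
theorem stmt3 {X : Type*} [NormedAddCommGroup X] [InnerProductSpace ℝ X]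
    [FiniteDimensional ℝ X]
    (Φ : X → EReal) (hne_bot : ∀ y, Φ y ≠ ⊥) (hproper : ∃ y, Φ y ≠ ⊤)
    (m : ℕ) (a : ℝ) (ha : 0 < a) (x : ℕ → X) (ℓ : ℕ → ℕ)
    (hH1 : ∀ k, Φ (x (k + 1)) + ((a * ‖x (k + 1) - x k‖ ^ 2 : ℝ) : EReal) ≤
      (Finset.Icc (k - m) k).sup' (Finset.nonempty_Icc.mpr (Nat.sub_le k m))
        (fun j => Φ (x j)))
    (hℓmem : ∀ k, ℓ k ∈ Finset.Icc (k - m) k)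
    (hℓmax : ∀ k, Φ (x (ℓ k)) =
      (Finset.Icc (k - m) k).sup' (Finset.nonempty_Icc.mpr (Nat.sub_le k m))
        (fun j => Φ (x j)))
    (hℓtop : ∀ k, ∀ j ∈ Finset.Icc (k - m) k, Φ (x j) = Φ (x (ℓ k)) → j ≤ ℓ k) :
    ∀ k, Φ (x (ℓ (k + 1))) ≤ Φ (x (ℓ k)) := by
  intro k
  rw [hℓmax (k + 1)]
  apply Finset.sup'_le
  intro j hj
  simp only [Finset.mem_Icc] at hj
  rcases eq_or_lt_of_le hj.2 with h | h
  · -- j = k+1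
    subst h
    calc Φ (x (k + 1)) ≤ Φ (x (k + 1)) + ((a * ‖x (k + 1) - x k‖ ^ 2 : ℝ) : EReal) := by
          apply le_add_of_nonneg_right
          exact_mod_cast mul_nonneg ha.le (sq_nonneg _)
      _ ≤ _ := hH1 k
      _ = Φ (x (ℓ k)) := (hℓmax k).symm
  · have hjk : j ≤ k := Nat.lt_succ_iff.mp h
    have hjm : k - m ≤ j := le_trans (Nat.sub_le_sub_right (Nat.le_succ k) m) hj.1
    rw [hℓmax k]
    exact Finset.le_sup' (fun j => Φ (x j)) (Finset.mem_Icc.mpr ⟨hjm, hjk⟩)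
end

section
/- Let f : X → ℝ be differentiable with L_f-Lipschitz gradient and g : X → ℝ ∪ {∞} proper lsc and bounded below. Fix τ > 0 with τ L_f < 1, a point y ∈ X, and let x⁺ be any element of the proximal mapping P_τ g(y − τ ∇f(y)), i.e., a minimizer of z ↦ (1/(2τ))‖z − (y − τ∇f(y))‖² + g(z). Then for F = f + g and any x ∈ dom g: F(x⁺) − F(x) ≤ −((τ⁻¹ − L_f)/4)‖x⁺ − x‖² + ((τ⁻¹ + L_f)²/(τ⁻¹ − L_f))‖x − y‖². -/
open InnerProductSpace intervalIntegral

lemma descent_lemma {X : Type*} [NormedAddCommGroup X] [InnerProductSpace ℝ X]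
    [FiniteDimensional ℝ X]
    (f : X → ℝ) (f' : X → X) (hf : ∀ y, HasGradientAt f (f' y) y)
    (Lf : NNReal) (hLf : LipschitzWith Lf f') (a b : X) :
    |f b - f a - ⟪f' a, b - a⟫_ℝ| ≤ (Lf : ℝ) / 2 * ‖b - a‖ ^ 2 := by
  set c : ℝ → X := fun t => a + t • (b - a) with hc
  have hcd : ∀ t : ℝ, HasDerivAt c (b - a) t := by
    intro t
    rw [hc]
    simpa using ((hasDerivAt_id t).smul_const (b - a)).const_add a
  have hhd : ∀ t : ℝ, HasDerivAt (fun t => f (c t)) ⟪f' (c t), b - a⟫_ℝ t := by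
    intro t
    have := (hf (c t)).hasFDerivAt.comp_hasDerivAt t (hcd t)
    simp only [InnerProductSpace.toDual_apply_apply] at this
    exact this
  have hccont : Continuous c := continuous_const.add (continuous_id.smul continuous_const)
  have hcont : Continuous fun t : ℝ => ⟪f' (c t), b - a⟫_ℝ :=
    ((hLf.continuous.comp hccont).inner continuous_const)
  have hint : IntervalIntegrable (fun t : ℝ => ⟪f' (c t), b - a⟫_ℝ)
      MeasureTheory.volume 0 1 := hcont.intervalIntegrable _ _
  have hFTC : (∫ t in (0:ℝ)..1, ⟪f' (c t), b - a⟫_ℝ) = f (c 1) - f (c 0) :=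
    integral_eq_sub_of_hasDerivAt (fun t _ => hhd t) hint
  have hc0 : c 0 = a := by simp [hc]
  have hc1 : c 1 = b := by simp [hc]
  have hconst : (∫ t in (0:ℝ)..1, ⟪f' a, b - a⟫_ℝ) = ⟪f' a, b - a⟫_ℝ := by simp
  have heq : f b - f a - ⟪f' a, b - a⟫_ℝ
      = ∫ t in (0:ℝ)..1, (⟪f' (c t), b - a⟫_ℝ - ⟪f' a, b - a⟫_ℝ) := by
    rw [integral_sub hint (intervalIntegrable_const), hFTC, hconst, hc0, hc1]
  rw [heq]
  have hbound : ∀ t ∈ Set.uIcc (0:ℝ) 1,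
      ‖⟪f' (c t), b - a⟫_ℝ - ⟪f' a, b - a⟫_ℝ‖ ≤ (Lf : ℝ) * ‖b - a‖ ^ 2 * t := by
    intro t ht
    rw [Set.uIcc_of_le (by norm_num)] at ht
    have h1 : ⟪f' (c t), b - a⟫_ℝ - ⟪f' a, b - a⟫_ℝ = ⟪f' (c t) - f' a, b - a⟫_ℝ := by
      rw [inner_sub_left]
    rw [h1]
    calc ‖⟪f' (c t) - f' a, b - a⟫_ℝ‖ ≤ ‖f' (c t) - f' a‖ * ‖b - a‖ :=
          norm_inner_le_norm _ _
      _ ≤ ((Lf : ℝ) * ‖c t - a‖) * ‖b - a‖ := by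
          gcongr
          have := hLf.dist_le_mul (c t) a
          simpa [dist_eq_norm] using this
      _ = (Lf : ℝ) * ‖b - a‖ ^ 2 * t := by
          have : ‖c t - a‖ = t * ‖b - a‖ := by
            simp [hc, norm_smul, abs_of_nonneg ht.1]
          rw [this]; ring
  have hgint : IntervalIntegrable (fun t : ℝ => (Lf : ℝ) * ‖b - a‖ ^ 2 * t)
      MeasureTheory.volume 0 1 :=
    (continuous_const.mul continuous_id).intervalIntegrable _ _
  have hae : ∀ᵐ t ∂(MeasureTheory.volume.restrict (Set.uIoc (0:ℝ) 1)),
      ‖⟪f' (c t), b - a⟫_ℝ - ⟪f' a, b - a⟫_ℝ‖ ≤ (Lf : ℝ) * ‖b - a‖ ^ 2 * t := by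
    refine MeasureTheory.ae_restrict_of_forall_mem measurableSet_uIoc ?_
    intro t ht
    exact hbound t ((Set.uIoc_subset_uIcc ht))
  have hkey := intervalIntegral.norm_integral_le_abs_of_norm_le hae hgint
  have hval : (∫ t in (0:ℝ)..1, (Lf : ℝ) * ‖b - a‖ ^ 2 * t) = (Lf : ℝ) / 2 * ‖b - a‖ ^ 2 := by
    rw [intervalIntegral.integral_const_mul]
    simp
    ring
  rw [hval] at hkey
  calc |∫ t in (0:ℝ)..1, (⟪f' (c t), b - a⟫_ℝ - ⟪f' a, b - a⟫_ℝ)|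
      ≤ |(Lf : ℝ) / 2 * ‖b - a‖ ^ 2| := hkey
    _ = (Lf : ℝ) / 2 * ‖b - a‖ ^ 2 := abs_of_nonneg (by positivity)

theorem stmt11 {X : Type*} [NormedAddCommGroup X] [InnerProductSpace ℝ X]
    [FiniteDimensional ℝ X]
    (f : X → ℝ) (f' : X → X) (hf : ∀ y, HasGradientAt f (f' y) y)
    (Lf : NNReal) (hLf : LipschitzWith Lf f')
    (g : X → EReal) (hlsc : LowerSemicontinuous g) (hne_bot : ∀ y, g y ≠ ⊥)
    (hproper : ∃ y, g y ≠ ⊤) (hbdd : ∃ B : ℝ, ∀ y, (B : EReal) ≤ g y)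
    (τ : ℝ) (hτ : 0 < τ) (hτL : τ * (Lf : ℝ) < 1)
    (y xplus : X)
    (hmin : ∀ z : X,
      ((1 / (2 * τ) * ‖xplus - (y - τ • f' y)‖ ^ 2 : ℝ) : EReal) + g xplus ≤
      ((1 / (2 * τ) * ‖z - (y - τ • f' y)‖ ^ 2 : ℝ) : EReal) + g z)
    (x : X) (hx : g x ≠ ⊤) :
    (f xplus : EReal) + g xplus +
        (((τ⁻¹ - (Lf : ℝ)) / 4 * ‖xplus - x‖ ^ 2 : ℝ) : EReal) ≤
      (f x : EReal) + g x +
        (((τ⁻¹ + (Lf : ℝ)) ^ 2 / (τ⁻¹ - (Lf : ℝ)) * ‖x - y‖ ^ 2 : ℝ) : EReal) := by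
  have hτ' : τ ≠ 0 := ne_of_gt hτ
  set B : ℝ := (g x).toReal with hBdef
  have hB : g x = (B : EReal) := (EReal.coe_toReal hx (hne_bot x)).symm
  have htop : g xplus ≠ ⊤ := by
    intro h
    have h1 := hmin x
    rw [h, hB, ← EReal.coe_add, EReal.coe_add_top] at h1
    exact ((EReal.coe_lt_top _).trans_le h1).false
  set A : ℝ := (g xplus).toReal with hAdef
  have hA : g xplus = (A : EReal) := (EReal.coe_toReal htop (hne_bot xplus)).symm
  have hm : 1 / (2 * τ) * ‖xplus - (y - τ • f' y)‖ ^ 2 + A ≤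
      1 / (2 * τ) * ‖x - (y - τ • f' y)‖ ^ 2 + B := by
    have h1 := hmin x
    rw [hA, hB, ← EReal.coe_add, ← EReal.coe_add] at h1
    exact_mod_cast h1
  -- expand the prox norms
  have expand : ∀ z : X, ‖z - (y - τ • f' y)‖ ^ 2
      = ‖z - y‖ ^ 2 + 2 * (τ * ⟪f' y, z - y⟫_ℝ) + τ ^ 2 * ‖f' y‖ ^ 2 := by
    intro z
    have hz : z - (y - τ • f' y) = (z - y) + τ • f' y := by module
    rw [hz, norm_add_sq_real, real_inner_smul_right, norm_smul, real_inner_comm]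
    rw [mul_pow]
    simp [abs_of_pos hτ]
  rw [expand, expand] at hm
  have hm' : τ⁻¹ / 2 * ‖xplus - y‖ ^ 2 + ⟪f' y, xplus - y⟫_ℝ + A ≤
      τ⁻¹ / 2 * ‖x - y‖ ^ 2 + ⟪f' y, x - y⟫_ℝ + B := by
    have e : ∀ s I : ℝ, 1 / (2 * τ) * (s + 2 * (τ * I) + τ ^ 2 * ‖f' y‖ ^ 2)
        = τ⁻¹ / 2 * s + I + τ / 2 * ‖f' y‖ ^ 2 := by
      intro s I; field_simp
    rw [e, e] at hm
    linarith
  have d1 := descent_lemma f f' hf Lf hLf y xplus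
  have d2 := descent_lemma f f' hf Lf hLf y x
  rw [abs_le] at d1 d2
  have haL : (Lf : ℝ) < τ⁻¹ := by
    rw [show τ⁻¹ = 1 / τ by ring, lt_div_iff₀ hτ]
    linarith [mul_comm τ (Lf : ℝ)]
  have hLpos : (0:ℝ) ≤ (Lf : ℝ) := Lf.coe_nonneg
  have hpos : (0:ℝ) < τ⁻¹ - (Lf : ℝ) := by linarith
  -- step 1
  have claim1 : f xplus + A - (f x + B) ≤
      -((τ⁻¹ - (Lf : ℝ)) / 2) * ‖xplus - y‖ ^ 2 + ((τ⁻¹ + (Lf : ℝ)) / 2) * ‖x - y‖ ^ 2 := by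
    nlinarith [d1.2, d2.1, hm']
  -- norm bound
  have hq : ‖xplus - x‖ ^ 2 ≤ 2 * ‖xplus - y‖ ^ 2 + 2 * ‖x - y‖ ^ 2 := by
    have h1 : xplus - x = (xplus - y) - (x - y) := by abel
    rw [h1, norm_sub_sq_real]
    nlinarith [abs_real_inner_le_norm (xplus - y) (x - y), abs_le.mp
      (abs_real_inner_le_norm (xplus - y) (x - y)), sq_nonneg (‖xplus - y‖ - ‖x - y‖)]
  have hdiv : τ⁻¹ ≤ (τ⁻¹ + (Lf : ℝ)) ^ 2 / (τ⁻¹ - (Lf : ℝ)) := by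
    rw [le_div_iff₀ hpos]
    nlinarith
  have main : f xplus + A + (τ⁻¹ - (Lf : ℝ)) / 4 * ‖xplus - x‖ ^ 2 ≤
      f x + B + (τ⁻¹ + (Lf : ℝ)) ^ 2 / (τ⁻¹ - (Lf : ℝ)) * ‖x - y‖ ^ 2 := by
    have h1 := mul_le_mul_of_nonneg_left hq
      (by positivity : (0:ℝ) ≤ (τ⁻¹ - (Lf : ℝ)) / 4)
    have h2 := mul_le_mul_of_nonneg_left hdiv (sq_nonneg ‖x - y‖)
    linarith [claim1, h1, h2]
  rw [hA, hB, ← EReal.coe_add, ← EReal.coe_add, ← EReal.coe_add, ← EReal.coe_add]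
  exact_mod_cast main
end

section
/- Let f : X → ℝ be differentiable with L_f-Lipschitz gradient, g : X → ℝ ∪ {∞} proper lsc. Fix δ ∈ (0, 1/2), α ∈ (0, δ/2), τ > 0 and β ≥ 0 with β ≤ √(δ(τ − τ²L_f)/(4(1 + τL_f)²)) and τ ≤ 1/(2α + 2δ + L_f). Given x^k, x^{k−1} ∈ dom g, set y^k = x^k + β(x^k − x^{k−1}) and let x^{k+1} ∈ P_τ g(y^k − τ∇f(y^k)). Define H_δ(x, u) := f(x) + g(x) + (δ/2)‖x − u‖², z^k := (x^k, x^{k−1}), z^{k+1} := (x^{k+1}, x^k). Then H_δ(z^{k+1}) ≤ H_δ(z^k) − (α/2)‖z^{k+1} − z^k‖². -/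
open RealInnerProductSpace

lemma descent_aux {X : Type*} [NormedAddCommGroup X] [InnerProductSpace ℝ X] [CompleteSpace X]
    (f : X → ℝ) (f' : X → X) (hf : ∀ y, HasGradientAt f (f' y) y)
    (L : NNReal) (hL : LipschitzWith L f') (a b : X) :
    f b ≤ f a + ⟪f' a, b - a⟫ + (L : ℝ) / 2 * ‖b - a‖ ^ 2 := by
  set v := b - a with hv
  have hline : ∀ t : ℝ, HasDerivAt (fun t : ℝ => a + t • v) v t := by
    intro t
    simpa using ((hasDerivAt_id t).smul_const v).const_add a
  have hφ : ∀ t : ℝ, HasDerivAt (fun t : ℝ => f (a + t • v)) ⟪f' (a + t • v), v⟫ t := by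
    intro t
    have h1 := (hasGradientAt_iff_hasFDerivAt.mp (hf (a + t • v))).comp_hasDerivAt t (hline t)
    simp [InnerProductSpace.toDual_apply_apply] at h1
    exact h1
  have hcont : Continuous fun t : ℝ => ⟪f' (a + t • v), v⟫ :=
    (hL.continuous.comp (by continuity)).inner continuous_const
  have hsub : ∫ t in (0:ℝ)..1, ⟪f' (a + t • v), v⟫ =
      f (a + (1:ℝ) • v) - f (a + (0:ℝ) • v) :=
    intervalIntegral.integral_eq_sub_of_hasDerivAt (fun t _ => hφ t)
      (hcont.intervalIntegrable 0 1)
  have hcont2 : Continuous fun t : ℝ => ⟪f' a, v⟫ + (L : ℝ) * ‖v‖ ^ 2 * t := by continuity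
  have hmono : ∫ t in (0:ℝ)..1, ⟪f' (a + t • v), v⟫ ≤
      ∫ t in (0:ℝ)..1, (⟪f' a, v⟫ + (L : ℝ) * ‖v‖ ^ 2 * t) := by
    apply intervalIntegral.integral_mono_on (by norm_num) (hcont.intervalIntegrable 0 1)
      (hcont2.intervalIntegrable 0 1)
    intro t ht
    have h1 : ⟪f' (a + t • v) - f' a, v⟫ ≤ ‖f' (a + t • v) - f' a‖ * ‖v‖ :=
      real_inner_le_norm _ _
    have h2 : ‖f' (a + t • v) - f' a‖ ≤ (L : ℝ) * (t * ‖v‖) := by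
      have h3 := hL.dist_le_mul (a + t • v) a
      rw [dist_eq_norm, dist_eq_norm] at h3
      simpa [norm_smul, abs_of_nonneg ht.1] using h3
    have h4 := mul_le_mul_of_nonneg_right h2 (norm_nonneg v)
    have h5 : ⟪f' (a + t • v) - f' a, v⟫ = ⟪f' (a + t • v), v⟫ - ⟪f' a, v⟫ :=
      inner_sub_left _ _ _
    nlinarith [h1, h4, h5]
  have hval : ∫ t in (0:ℝ)..1, (⟪f' a, v⟫ + (L : ℝ) * ‖v‖ ^ 2 * t) =
      ⟪f' a, v⟫ + (L : ℝ) * ‖v‖ ^ 2 / 2 := by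
    rw [intervalIntegral.integral_add (intervalIntegrable_const)
      ((by fun_prop : Continuous fun t : ℝ => (L : ℝ) * ‖v‖ ^ 2 * t).intervalIntegrable 0 1)]
    rw [intervalIntegral.integral_const_mul, integral_id]
    simp
    ring
  have he1 : a + (1:ℝ) • v = b := by simp [hv]
  have he0 : a + (0:ℝ) • v = a := by simp
  rw [he1, he0] at hsub
  nlinarith [hsub, hmono, hval]


lemma descent_aux_lower {X : Type*} [NormedAddCommGroup X] [InnerProductSpace ℝ X] [CompleteSpace X]
    (f : X → ℝ) (f' : X → X) (hf : ∀ y, HasGradientAt f (f' y) y)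
    (L : NNReal) (hL : LipschitzWith L f') (a b : X) :
    f a + ⟪f' a, b - a⟫ - (L : ℝ) / 2 * ‖b - a‖ ^ 2 ≤ f b := by
  set v := b - a with hv
  have hline : ∀ t : ℝ, HasDerivAt (fun t : ℝ => a + t • v) v t := by
    intro t
    simpa using ((hasDerivAt_id t).smul_const v).const_add a
  have hφ : ∀ t : ℝ, HasDerivAt (fun t : ℝ => f (a + t • v)) ⟪f' (a + t • v), v⟫ t := by
    intro t
    have h1 := (hasGradientAt_iff_hasFDerivAt.mp (hf (a + t • v))).comp_hasDerivAt t (hline t)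
    simp [InnerProductSpace.toDual_apply_apply] at h1
    exact h1
  have hcont : Continuous fun t : ℝ => ⟪f' (a + t • v), v⟫ :=
    (hL.continuous.comp (by continuity)).inner continuous_const
  have hsub : ∫ t in (0:ℝ)..1, ⟪f' (a + t • v), v⟫ =
      f (a + (1:ℝ) • v) - f (a + (0:ℝ) • v) :=
    intervalIntegral.integral_eq_sub_of_hasDerivAt (fun t _ => hφ t)
      (hcont.intervalIntegrable 0 1)
  have hcont2 : Continuous fun t : ℝ => ⟪f' a, v⟫ - (L : ℝ) * ‖v‖ ^ 2 * t := by continuity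
  have hmono : ∫ t in (0:ℝ)..1, (⟪f' a, v⟫ - (L : ℝ) * ‖v‖ ^ 2 * t) ≤
      ∫ t in (0:ℝ)..1, ⟪f' (a + t • v), v⟫ := by
    apply intervalIntegral.integral_mono_on (by norm_num) (hcont2.intervalIntegrable 0 1)
      (hcont.intervalIntegrable 0 1)
    intro t ht
    have h1 : ⟪f' a - f' (a + t • v), v⟫ ≤ ‖f' a - f' (a + t • v)‖ * ‖v‖ :=
      real_inner_le_norm _ _
    have h2 : ‖f' a - f' (a + t • v)‖ ≤ (L : ℝ) * (t * ‖v‖) := by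
      have h3 := hL.dist_le_mul a (a + t • v)
      rw [dist_eq_norm, dist_eq_norm] at h3
      have h4 : a - (a + t • v) = -(t • v) := by abel
      rw [h4, norm_neg] at h3
      simpa [norm_smul, abs_of_nonneg ht.1] using h3
    have h4 := mul_le_mul_of_nonneg_right h2 (norm_nonneg v)
    have h5 : ⟪f' a - f' (a + t • v), v⟫ = ⟪f' a, v⟫ - ⟪f' (a + t • v), v⟫ :=
      inner_sub_left _ _ _
    nlinarith [h1, h4, h5]
  have hval : ∫ t in (0:ℝ)..1, (⟪f' a, v⟫ - (L : ℝ) * ‖v‖ ^ 2 * t) =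
      ⟪f' a, v⟫ - (L : ℝ) * ‖v‖ ^ 2 / 2 := by
    rw [intervalIntegral.integral_sub (intervalIntegrable_const)
      ((by fun_prop : Continuous fun t : ℝ => (L : ℝ) * ‖v‖ ^ 2 * t).intervalIntegrable 0 1),
      intervalIntegral.integral_const_mul, integral_id]
    simp
    ring
  have he1 : a + (1:ℝ) • v = b := by simp [hv]
  have he0 : a + (0:ℝ) • v = a := by simp
  rw [he1, he0] at hsub
  nlinarith [hsub, hmono, hval]

set_option maxHeartbeats 2000000 in
theorem stmt12 {X : Type*} [NormedAddCommGroup X] [InnerProductSpace ℝ X]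
    [FiniteDimensional ℝ X]
    (f : X → ℝ) (f' : X → X) (hf : ∀ y, HasGradientAt f (f' y) y)
    (Lf : NNReal) (hLf : LipschitzWith Lf f')
    (g : X → EReal) (hlsc : LowerSemicontinuous g) (hne_bot : ∀ y, g y ≠ ⊥)
    (δ α τ β : ℝ)
    (hδ : δ ∈ Set.Ioo (0 : ℝ) (1 / 2)) (hα : α ∈ Set.Ioo (0 : ℝ) (δ / 2))
    (hτ : 0 < τ) (hβ0 : 0 ≤ β)
    (hβ : β ≤ Real.sqrt (δ * (τ - τ ^ 2 * (Lf : ℝ)) / (4 * (1 + τ * (Lf : ℝ)) ^ 2)))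
    (hτle : τ ≤ 1 / (2 * α + 2 * δ + (Lf : ℝ)))
    (xk xkm : X) (hxk : g xk ≠ ⊤) (hxkm : g xkm ≠ ⊤)
    (yk : X) (hyk : yk = xk + β • (xk - xkm))
    (xk1 : X)
    (hmin : ∀ z : X,
      ((1 / (2 * τ) * ‖xk1 - (yk - τ • f' yk)‖ ^ 2 : ℝ) : EReal) + g xk1 ≤
      ((1 / (2 * τ) * ‖z - (yk - τ • f' yk)‖ ^ 2 : ℝ) : EReal) + g z) :
    (f xk1 : EReal) + g xk1 + ((δ / 2 * ‖xk1 - xk‖ ^ 2 : ℝ) : EReal) +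
        ((α / 2 * (‖xk1 - xk‖ ^ 2 + ‖xk - xkm‖ ^ 2) : ℝ) : EReal) ≤
      (f xk : EReal) + g xk + ((δ / 2 * ‖xk - xkm‖ ^ 2 : ℝ) : EReal) := by
  obtain ⟨hδ0, hδ2⟩ := hδ
  obtain ⟨hα0, hα2⟩ := hα
  have hL0 : (0:ℝ) ≤ (Lf : ℝ) := Lf.coe_nonneg
  have hS : (0:ℝ) < 2 * α + 2 * δ + (Lf : ℝ) := by linarith
  have hinv : 2 * α + 2 * δ + (Lf : ℝ) ≤ 1 / τ := by
    have h1 := one_div_le_one_div_of_le hτ hτle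
    rwa [one_div_one_div] at h1
  have hτL : τ * (Lf : ℝ) < 1 := by
    have h2 : τ * (2 * α + 2 * δ + (Lf : ℝ)) ≤ 1 := by
      have h3 := mul_le_mul_of_nonneg_left hinv hτ.le
      rw [mul_one_div, div_self hτ.ne'] at h3
      linarith [h3]
    nlinarith [mul_pos hτ (show (0:ℝ) < 2 * α + 2 * δ by linarith), h2]
  have hE0 : (0:ℝ) ≤ δ * (τ - τ ^ 2 * (Lf : ℝ)) / (4 * (1 + τ * (Lf : ℝ)) ^ 2) := by
    apply div_nonneg
    · have h : (0:ℝ) ≤ τ - τ ^ 2 * (Lf : ℝ) := by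
        nlinarith [mul_nonneg hτ.le (show (0:ℝ) ≤ 1 - τ * (Lf : ℝ) by linarith)]
      exact mul_nonneg hδ0.le h
    · positivity
  have hβ2 : β ^ 2 ≤ δ * (τ - τ ^ 2 * (Lf : ℝ)) / (4 * (1 + τ * (Lf : ℝ)) ^ 2) := by
    calc β ^ 2 ≤ Real.sqrt (δ * (τ - τ ^ 2 * (Lf : ℝ)) / (4 * (1 + τ * (Lf : ℝ)) ^ 2)) ^ 2 :=
          pow_le_pow_left₀ hβ0 hβ 2
      _ = _ := Real.sq_sqrt hE0
  have hβ4 : β ^ 2 ≤ δ * τ / 4 := by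
    have hq : (0:ℝ) < 4 * (1 + τ * (Lf : ℝ)) ^ 2 := by positivity
    rw [le_div_iff₀ hq] at hβ2
    nlinarith [sq_nonneg β, mul_nonneg hτ.le hL0, sq_nonneg (τ * (Lf : ℝ))]
  -- finiteness of g xk1
  have hmk := hmin xk
  obtain ⟨Gk, hgk⟩ : ∃ r : ℝ, g xk = (r : EReal) :=
    ⟨(g xk).toReal, (EReal.coe_toReal hxk (hne_bot xk)).symm⟩
  have hxk1top : g xk1 ≠ ⊤ := by
    intro htop
    rw [htop, hgk, EReal.add_top_of_ne_bot (EReal.coe_ne_bot _), ← EReal.coe_add] at hmk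
    exact (EReal.coe_ne_top _) (top_le_iff.mp hmk)
  obtain ⟨Gk1, hgk1⟩ : ∃ r : ℝ, g xk1 = (r : EReal) :=
    ⟨(g xk1).toReal, (EReal.coe_toReal hxk1top (hne_bot xk1)).symm⟩
  -- real form of the prox inequality
  have hprox0 : 1 / (2 * τ) * ‖xk1 - (yk - τ • f' yk)‖ ^ 2 + Gk1 ≤
      1 / (2 * τ) * ‖xk - (yk - τ • f' yk)‖ ^ 2 + Gk := by
    rw [hgk, hgk1, ← EReal.coe_add, ← EReal.coe_add, EReal.coe_le_coe_iff] at hmk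
    exact hmk
  -- expansions
  have hAe : 1 / (2 * τ) * ‖xk1 - (yk - τ • f' yk)‖ ^ 2 =
      1 / (2 * τ) * ‖xk1 - yk‖ ^ 2 + ⟪f' yk, xk1 - yk⟫ + τ / 2 * ‖f' yk‖ ^ 2 := by
    rw [show xk1 - (yk - τ • f' yk) = (xk1 - yk) + τ • f' yk by abel, norm_add_sq_real,
      real_inner_smul_right, norm_smul, Real.norm_eq_abs, abs_of_pos hτ, mul_pow,
      real_inner_comm]
    field_simp
  have hBe : 1 / (2 * τ) * ‖xk - (yk - τ • f' yk)‖ ^ 2 =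
      1 / (2 * τ) * ‖xk - yk‖ ^ 2 + ⟪f' yk, xk - yk⟫ + τ / 2 * ‖f' yk‖ ^ 2 := by
    rw [show xk - (yk - τ • f' yk) = (xk - yk) + τ • f' yk by abel, norm_add_sq_real,
      real_inner_smul_right, norm_smul, Real.norm_eq_abs, abs_of_pos hτ, mul_pow,
      real_inner_comm]
    field_simp
  rw [hAe, hBe] at hprox0
  -- descent lemma applications
  have hd1 : f xk1 ≤ f yk + ⟪f' yk, xk1 - yk⟫ + (Lf : ℝ) / 2 * ‖xk1 - yk‖ ^ 2 :=
    descent_aux f f' hf Lf hLf yk xk1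
  have hd2 : f yk + ⟪f' yk, xk - yk⟫ - (Lf : ℝ) / 2 * ‖xk - yk‖ ^ 2 ≤ f xk :=
    descent_aux_lower f f' hf Lf hLf yk xk
  -- combined function decrease
  have hF : f xk1 + Gk1 ≤ f xk + Gk + ((Lf : ℝ) / 2 - 1 / (2 * τ)) * ‖xk1 - yk‖ ^ 2 +
      ((Lf : ℝ) / 2 + 1 / (2 * τ)) * ‖xk - yk‖ ^ 2 := by
    linarith [hprox0, hd1, hd2]
  -- geometric facts
  have hQ : ‖xk - yk‖ ^ 2 = β ^ 2 * ‖xk - xkm‖ ^ 2 := by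
    rw [show xk - yk = -(β • (xk - xkm)) by rw [hyk]; abel, norm_neg, norm_smul,
      Real.norm_eq_abs, abs_of_nonneg hβ0, mul_pow]
  have htri : ‖xk1 - xk‖ ^ 2 ≤ 2 * ‖xk1 - yk‖ ^ 2 + 2 * ‖xk - yk‖ ^ 2 := by
    have h1 : ‖xk1 - xk‖ ≤ ‖xk1 - yk‖ + ‖yk - xk‖ := norm_sub_le_norm_sub_add_norm_sub _ _ _
    rw [norm_sub_rev yk xk] at h1
    have h2 : ‖xk1 - xk‖ ^ 2 ≤ (‖xk1 - yk‖ + ‖xk - yk‖) ^ 2 :=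
      pow_le_pow_left₀ (norm_nonneg _) h1 2
    linarith [h2, sq_nonneg (‖xk1 - yk‖ - ‖xk - yk‖)]
  -- coefficient inequalities
  have hc0 : (Lf : ℝ) / 2 - 1 / (2 * τ) ≤ 0 := by
    have e : 1 / (2 * τ) = (1 / τ) / 2 := by ring
    rw [e]; linarith
  have hPc : ((Lf : ℝ) / 2 - 1 / (2 * τ)) * ‖xk1 - yk‖ ^ 2 ≤
      ((Lf : ℝ) / 2 - 1 / (2 * τ)) * (‖xk1 - xk‖ ^ 2 / 2 - ‖xk - yk‖ ^ 2) :=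
    mul_le_mul_of_nonpos_left (by linarith) hc0
  have hF2 : f xk1 + Gk1 ≤ f xk + Gk + ((Lf : ℝ) / 4 - 1 / (4 * τ)) * ‖xk1 - xk‖ ^ 2 +
      (1 / τ) * ‖xk - yk‖ ^ 2 := by
    have e1 : ((Lf : ℝ) / 2 - 1 / (2 * τ)) * (‖xk1 - xk‖ ^ 2 / 2 - ‖xk - yk‖ ^ 2) +
        ((Lf : ℝ) / 2 + 1 / (2 * τ)) * ‖xk - yk‖ ^ 2 =
        ((Lf : ℝ) / 4 - 1 / (4 * τ)) * ‖xk1 - xk‖ ^ 2 + (1 / τ) * ‖xk - yk‖ ^ 2 := by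
      field_simp
      ring
    linarith [hF, hPc, e1]
  have hβQ : (1 / τ) * ‖xk - yk‖ ^ 2 ≤ δ / 4 * ‖xk - xkm‖ ^ 2 := by
    rw [hQ]
    have h1 : β ^ 2 * ‖xk - xkm‖ ^ 2 ≤ (δ * τ / 4) * ‖xk - xkm‖ ^ 2 :=
      mul_le_mul_of_nonneg_right hβ4 (by positivity)
    have h2 : (1 / τ) * ((δ * τ / 4) * ‖xk - xkm‖ ^ 2) = δ / 4 * ‖xk - xkm‖ ^ 2 := by
      field_simp
    calc (1 / τ) * (β ^ 2 * ‖xk - xkm‖ ^ 2) ≤ (1 / τ) * ((δ * τ / 4) * ‖xk - xkm‖ ^ 2) :=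
          mul_le_mul_of_nonneg_left h1 (by positivity)
      _ = δ / 4 * ‖xk - xkm‖ ^ 2 := h2
  have hcoef : (δ / 2 + α / 2) * ‖xk1 - xk‖ ^ 2 ≤
      (1 / (4 * τ) - (Lf : ℝ) / 4) * ‖xk1 - xk‖ ^ 2 := by
    apply mul_le_mul_of_nonneg_right _ (by positivity)
    have e : 1 / (4 * τ) = (1 / τ) / 4 := by ring
    rw [e]; linarith
  have hαD0 : α / 2 * ‖xk - xkm‖ ^ 2 ≤ δ / 4 * ‖xk - xkm‖ ^ 2 :=
    mul_le_mul_of_nonneg_right (by linarith) (by positivity)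
  have hreal : f xk1 + Gk1 + δ / 2 * ‖xk1 - xk‖ ^ 2 +
      α / 2 * (‖xk1 - xk‖ ^ 2 + ‖xk - xkm‖ ^ 2) ≤ f xk + Gk + δ / 2 * ‖xk - xkm‖ ^ 2 := by
    linarith [hF2, hβQ, hcoef, hαD0]
  rw [hgk, hgk1, ← EReal.coe_add, ← EReal.coe_add, ← EReal.coe_add, ← EReal.coe_add,
    ← EReal.coe_add, EReal.coe_le_coe_iff]
  exact hreal
end

section
/- Let f : X → ℝ be differentiable with L-Lipschitz gradient, g : X → ℝ ∪ {∞} proper lsc, τ > 0, y ∈ X, and x⁺ ∈ P_τ g(y − τ∇f(y)). Then w := ∇f(x⁺) − ∇f(y) − τ⁻¹(x⁺ − y) belongs to ∂F(x⁺) where F = f + g, and ‖w‖ ≤ (L + τ⁻¹)‖x⁺ − y‖. -/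
open Filter Topology RealInnerProductSpace

variable {X : Type*} [NormedAddCommGroup X] [InnerProductSpace ℝ X] [FiniteDimensional ℝ X]

/-- The regular (Fréchet) subdifferential of an extended-real-valued function. -/
def regularSubdiff (Φ : X → EReal) (x : X) : Set X :=
  {v | Φ x ≠ ⊤ ∧ ∀ ε : ℝ, 0 < ε → ∀ᶠ y in 𝓝 x,
      Φ x + (((inner ℝ v (y - x) : ℝ)) : EReal) - ((ε * ‖y - x‖ : ℝ) : EReal) ≤ Φ y}

/-- The limiting (Mordukhovich) subdifferential. -/
def limitingSubdiff (Φ : X → EReal) (x : X) : Set X :=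
  {v | ∃ (xs : ℕ → X) (vs : ℕ → X),
      Tendsto xs atTop (𝓝 x) ∧
      Tendsto (fun n => Φ (xs n)) atTop (𝓝 (Φ x)) ∧
      (∀ n, vs n ∈ regularSubdiff Φ (xs n)) ∧ Tendsto vs atTop (𝓝 v)}

theorem stmt13
    (f : X → ℝ) (f' : X → X) (hf : ∀ y, HasGradientAt f (f' y) y)
    (L : NNReal) (hL : LipschitzWith L f')
    (g : X → EReal) (hlsc : LowerSemicontinuous g) (hne_bot : ∀ y, g y ≠ ⊥)
    (hproper : ∃ y, g y ≠ ⊤)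
    (τ : ℝ) (hτ : 0 < τ) (y xplus : X)
    (hmin : ∀ z : X,
      ((1 / (2 * τ) * ‖xplus - (y - τ • f' y)‖ ^ 2 : ℝ) : EReal) + g xplus ≤
      ((1 / (2 * τ) * ‖z - (y - τ • f' y)‖ ^ 2 : ℝ) : EReal) + g z) :
    f' xplus - f' y - τ⁻¹ • (xplus - y) ∈
        limitingSubdiff (fun z => (f z : EReal) + g z) xplus ∧
      ‖f' xplus - f' y - τ⁻¹ • (xplus - y)‖ ≤ ((L : ℝ) + τ⁻¹) * ‖xplus - y‖ := by
  set w := f' xplus - f' y - τ⁻¹ • (xplus - y) with hw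
  set a := y - τ • f' y with ha
  -- g xplus is finite
  obtain ⟨z0, hz0⟩ := hproper
  have hgx_ne_top : g xplus ≠ ⊤ := by
    intro h
    have h1 := hmin z0
    rw [h, EReal.add_top_iff_ne_bot.mpr (by exact EReal.coe_ne_bot _)] at h1
    exact absurd (top_le_iff.mp h1) (EReal.add_lt_top (EReal.coe_ne_top _) hz0).ne
  obtain ⟨c, hc⟩ : ∃ c : ℝ, g xplus = (c : EReal) := by
    lift g xplus to ℝ using ⟨hgx_ne_top, hne_bot xplus⟩ with c hc
    exact ⟨c, rfl⟩
  -- norm bound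
  have hnorm : ‖w‖ ≤ ((L : ℝ) + τ⁻¹) * ‖xplus - y‖ := by
    have h1 : ‖f' xplus - f' y‖ ≤ (L : ℝ) * ‖xplus - y‖ := by
      have := hL.dist_le_mul xplus y
      simpa [dist_eq_norm] using this
    calc ‖w‖ ≤ ‖f' xplus - f' y‖ + ‖τ⁻¹ • (xplus - y)‖ := norm_sub_le _ _
      _ ≤ (L : ℝ) * ‖xplus - y‖ + τ⁻¹ * ‖xplus - y‖ := by
          rw [norm_smul, Real.norm_eq_abs, abs_of_pos (inv_pos.mpr hτ)]
          exact add_le_add h1 le_rfl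
      _ = ((L : ℝ) + τ⁻¹) * ‖xplus - y‖ := by ring
  refine ⟨⟨fun _ => xplus, fun _ => w, tendsto_const_nhds, tendsto_const_nhds, fun _ => ?_,
    tendsto_const_nhds⟩, hnorm⟩
  -- regular subdifferential membership
  refine ⟨by simp [hc, ← EReal.coe_add], ?_⟩
  intro ε hε
  have hder : ∀ᶠ z in 𝓝 xplus,
      ‖f z - f xplus - ⟪f' xplus, z - xplus⟫‖ ≤ (ε / 2) * ‖z - xplus‖ := by
    have := (hasGradientAt_iff_isLittleO.mp (hf xplus)).def (show (0:ℝ) < ε / 2 by linarith)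
    filter_upwards [this] with z hz
    exact hz
  have hsmall : ∀ᶠ z in 𝓝 xplus, ‖z - xplus‖ ≤ ε * τ := by
    have hb : Metric.ball xplus (ε * τ) ∈ 𝓝 xplus :=
      Metric.ball_mem_nhds _ (by positivity)
    filter_upwards [hb] with z hz
    rw [Metric.mem_ball, dist_eq_norm] at hz
    exact hz.le
  filter_upwards [hder, hsmall] with z h1 h2
  by_cases hgz : g z = ⊤
  · simp only [hgz]
    rw [EReal.add_top_iff_ne_bot.mpr (EReal.coe_ne_bot _)]
    exact le_top
  obtain ⟨d, hd⟩ : ∃ d : ℝ, g z = (d : EReal) := by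
    lift g z to ℝ using ⟨hgz, hne_bot z⟩ with d hd
    exact ⟨d, rfl⟩
  -- extract real inequality from hmin
  have hmr : 1 / (2 * τ) * ‖xplus - a‖ ^ 2 + c ≤ 1 / (2 * τ) * ‖z - a‖ ^ 2 + d := by
    have := hmin z
    rw [hc, hd, ← EReal.coe_add, ← EReal.coe_add, EReal.coe_le_coe_iff] at this
    exact this
  simp only [hc, hd, ← EReal.coe_add, ← EReal.coe_sub, EReal.coe_le_coe_iff]
  -- real-valued goal
  have hexp : ‖z - a‖ ^ 2 = ‖z - xplus‖ ^ 2 + 2 * ⟪z - xplus, xplus - a⟫ + ‖xplus - a‖ ^ 2 := by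
    rw [show z - a = (z - xplus) + (xplus - a) by abel, norm_add_sq_real]
  have hinner1 : ⟪z - xplus, xplus - a⟫ =
      ⟪z - xplus, xplus - y⟫ + τ * ⟪z - xplus, f' y⟫ := by
    rw [show xplus - a = (xplus - y) + τ • f' y by rw [ha]; abel,
      inner_add_right, real_inner_smul_right]
  have hinner2 : ⟪w, z - xplus⟫ =
      ⟪f' xplus, z - xplus⟫ - ⟪f' y, z - xplus⟫ - τ⁻¹ * ⟪xplus - y, z - xplus⟫ := by
    rw [hw, inner_sub_left, inner_sub_left, real_inner_smul_left]
  have hq : 1 / (2 * τ) * ‖z - xplus‖ ^ 2 ≤ (ε / 2) * ‖z - xplus‖ := by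
    have h0 : (0:ℝ) ≤ ‖z - xplus‖ := norm_nonneg _
    have : ‖z - xplus‖ ^ 2 ≤ (ε * τ) * ‖z - xplus‖ := by
      nlinarith
    calc 1 / (2 * τ) * ‖z - xplus‖ ^ 2 ≤ 1 / (2 * τ) * ((ε * τ) * ‖z - xplus‖) := by
          apply mul_le_mul_of_nonneg_left this; positivity
      _ = (ε / 2) * ‖z - xplus‖ := by field_simp
  have habs := abs_le.mp (by rwa [Real.norm_eq_abs] at h1)
  have hsym : ⟪z - xplus, xplus - y⟫ = ⟪xplus - y, z - xplus⟫ := real_inner_comm _ _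
  have hsym2 : ⟪z - xplus, f' y⟫ = ⟪f' y, z - xplus⟫ := real_inner_comm _ _
  have hτ' : τ ≠ 0 := ne_of_gt hτ
  rw [hexp] at hmr
  rw [hinner1, hsym, hsym2] at hmr
  rw [hinner2]
  have key : d ≥ c - 1 / (2 * τ) * ‖z - xplus‖ ^ 2
      - τ⁻¹ * ⟪xplus - y, z - xplus⟫ - ⟪f' y, z - xplus⟫ := by
    have e1 : 1 / (2 * τ) * (2 * (⟪xplus - y, z - xplus⟫ + τ * ⟪f' y, z - xplus⟫))
        = τ⁻¹ * ⟪xplus - y, z - xplus⟫ + ⟪f' y, z - xplus⟫ := by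
      field_simp
    nlinarith [hmr]
  linarith [habs.1, hq, key]
end

section
/- Let {Ξ_j} be a nonnegative sequence with ∑_{j=1}^∞ Ξ_j < ∞, and let {x^k} satisfy: for all k ≥ k̂, ‖x^{k+1} − x^k‖ ≤ √(C·Ξ_k·(φ_k − φ_{k+1})), where {φ_k} is a nonincreasing nonnegative sequence and C > 0. Then ∑_{k=k̂}^∞ ‖x^{k+1} − x^k‖ < ∞, and hence {x^k} is a Cauchy sequence. -/
theorem stmt19 {X : Type*} [NormedAddCommGroup X] [InnerProductSpace ℝ X]
    [FiniteDimensional ℝ X]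
    (Ξ : ℕ → ℝ) (hΞ : ∀ j, 0 ≤ Ξ j) (hΞsum : Summable Ξ)
    (φ : ℕ → ℝ) (hφ : ∀ k, 0 ≤ φ k) (hφmono : ∀ k, φ (k + 1) ≤ φ k)
    (C : ℝ) (hC : 0 < C) (x : ℕ → X) (khat : ℕ)
    (h : ∀ k, khat ≤ k → ‖x (k + 1) - x k‖ ≤ Real.sqrt (C * Ξ k * (φ k - φ (k + 1)))) :
    Summable (fun k => ‖x (k + 1) - x k‖) ∧ CauchySeq x := by
  -- summability of the telescoping differences
  have hφdiff : Summable (fun k => φ k - φ (k + 1)) := by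
    apply summable_of_sum_range_le (c := φ 0)
    · intro n; linarith [hφmono n]
    · intro n
      rw [Finset.sum_range_sub' φ n]
      linarith [hφ n]
  have hg : Summable (fun k => (C * Ξ k + (φ k - φ (k + 1))) / 2) :=
    (((hΞsum.mul_left C).add hφdiff).div_const 2)
  have key : Summable (fun k => ‖x (k + 1) - x k‖) := by
    rw [← summable_nat_add_iff khat]
    refine Summable.of_nonneg_of_le (fun n => norm_nonneg _) ?_
      (hg.comp_injective (add_left_injective khat))
    · intro n
      have hb : 0 ≤ φ (n + khat) - φ (n + khat + 1) := by linarith [hφmono (n + khat)]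
      have ha : 0 ≤ C * Ξ (n + khat) := mul_nonneg hC.le (hΞ _)
      have h1 := h (n + khat) (Nat.le_add_left _ _)
      have h2 : Real.sqrt (C * Ξ (n + khat) * (φ (n + khat) - φ (n + khat + 1)))
          ≤ (C * Ξ (n + khat) + (φ (n + khat) - φ (n + khat + 1))) / 2 := by
        have := Real.sqrt_le_sqrt (show C * Ξ (n + khat) * (φ (n + khat) - φ (n + khat + 1))
            ≤ ((C * Ξ (n + khat) + (φ (n + khat) - φ (n + khat + 1))) / 2) ^ 2 by nlinarith [sq_nonneg (C * Ξ (n + khat) - (φ (n + khat) - φ (n + khat + 1)))])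
        rwa [Real.sqrt_sq (by linarith)] at this
      exact h1.trans h2
  refine ⟨key, ?_⟩
  apply cauchySeq_of_summable_dist
  have : (fun n => dist (x n) (x (n + 1))) = fun n => ‖x (n + 1) - x n‖ := by
    funext n; rw [dist_eq_norm, norm_sub_rev]
  rw [this]
  exact key
end
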